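/- Let λ : ℤ → ℝ be strictly increasing with λ_n → ±∞ as n → ±∞ and let f : ℤ → ℂ. Then the two piecewise cubic formulas defining Φ₂f agree at the common endpoints of their intervals (so Φ₂f : ℝ → ℂ is well defined), Φ₂f is continuously differentiable on ℝ, and for every n ∈ ℤ: (Φ₂f)(λ_n) = f_n, (Φ₂f)'(λ_n) = α_n(f), (Φ₂f)(μ_n) = (f_n + f_{n+1})/2, and (Φ₂f)'(μ_n) = f[λ_n,λ_{n+1}]. -/

import Mathlib

open MeasureTheory
open scoped ENNReal NNReal

/-- `lam` is a strictly increasing sequence tending to `-∞` at `-∞` and `+∞` at `+∞`. -/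
def GoodSeq (lam : ℤ → ℝ) : Prop :=
  StrictMono lam ∧ Filter.Tendsto lam Filter.atBot Filter.atBot ∧
    Filter.Tendsto lam Filter.atTop Filter.atTop

/-- `F` is an admissible `r`-extension of `f : ℤ → ℂ`, with associated `r`-th derivative `G`:
`F` is `(r-1)` times continuously differentiable, `G` is locally integrable,
`F^{(r-1)}(b) - F^{(r-1)}(a) = ∫_a^b G` for all `a ≤ b`, and `F (lam n) = f n` for all `n`. -/
def AdmissibleExt (r : ℕ) (lam : ℤ → ℝ) (f : ℤ → ℂ) (F G : ℝ → ℂ) : Prop :=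
  ContDiff ℝ (r - 1 : ℕ) F ∧ MeasureTheory.LocallyIntegrable G volume ∧
  (∀ a b : ℝ, a ≤ b →
      iteratedDeriv (r - 1) F b - iteratedDeriv (r - 1) F a = ∫ t in a..b, G t) ∧
  (∀ n : ℤ, F (lam n) = f n)

/-- Homogeneous trace seminorm `‖f‖_{L^r_p|Λ}`, valued in `[0,∞]`. -/
noncomputable def traceL (r : ℕ) (p : ℝ) (lam : ℤ → ℝ) (f : ℤ → ℂ) : ℝ≥0∞ :=
  ⨅ (F : ℝ → ℂ) (G : ℝ → ℂ) (_ : AdmissibleExt r lam f F G),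
    (∫⁻ t, ENNReal.ofReal (‖G t‖ ^ p)) ^ (1 / p)

/-- Trace norm `‖f‖_{W^r_p|Λ}`, valued in `[0,∞]`. -/
noncomputable def traceW (r : ℕ) (p : ℝ) (lam : ℤ → ℝ) (f : ℤ → ℂ) : ℝ≥0∞ :=
  ⨅ (F : ℝ → ℂ) (G : ℝ → ℂ) (_ : AdmissibleExt r lam f F G),
    ((∫⁻ t, ENNReal.ofReal (‖F t‖ ^ p)) +
      (∫⁻ t, ENNReal.ofReal (‖G t‖ ^ p))) ^ (1 / p)

/-- First order divided difference `f[λ_n, λ_{n+1}]`. -/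
noncomputable def dd1 (lam : ℤ → ℝ) (f : ℤ → ℂ) (n : ℤ) : ℂ :=
  (f (n + 1) - f n) / ((lam (n + 1) - lam n : ℝ) : ℂ)

/-- Second order divided difference `f[λ_n, λ_{n+1}, λ_{n+2}]`. -/
noncomputable def dd2 (lam : ℤ → ℝ) (f : ℤ → ℂ) (n : ℤ) : ℂ :=
  (dd1 lam f (n + 1) - dd1 lam f n) / ((lam (n + 2) - lam n : ℝ) : ℂ)

/-- Divided difference `f[λ_n, …, λ_{n+k}]` of order `k`. -/
noncomputable def ddiv (lam : ℤ → ℝ) (f : ℤ → ℂ) (n : ℤ) (k : ℕ) : ℂ :=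
  ∑ i ∈ Finset.range (k + 1),
    f (n + (i : ℤ)) /
      ∏ j ∈ (Finset.range (k + 1)).erase i,
        ((lam (n + (i : ℤ)) - lam (n + (j : ℤ)) : ℝ) : ℂ)

/-- Divided difference of values `v` at (distinct) points `x`. -/
noncomputable def ddPts {m : ℕ} (x : Fin m → ℝ) (v : Fin m → ℂ) : ℂ :=
  ∑ i, v i / ∏ j ∈ Finset.univ.erase i, ((x i - x j : ℝ) : ℂ)

/-- `F` is of class `W^r` on `[a,b]` with `r`-th derivative `G`. -/
def ClassW (r : ℕ) (a b : ℝ) (F G : ℝ → ℂ) : Prop :=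
  ContDiffOn ℝ (r - 1 : ℕ) F (Set.Icc a b) ∧ MeasureTheory.IntegrableOn G (Set.Icc a b) ∧
  ∀ x y : ℝ, a ≤ x → x ≤ y → y ≤ b →
    iteratedDerivWithin (r - 1) F (Set.Icc a b) y -
      iteratedDerivWithin (r - 1) F (Set.Icc a b) x = ∫ t in x..y, G t

/-- `‖f‖_{eq,L}^p`, valued in `[0,∞]`. -/
noncomputable def eqLp (r : ℕ) (p : ℝ) (lam : ℤ → ℝ) (f : ℤ → ℂ) : ℝ≥0∞ :=
  ∑' n : ℤ, ENNReal.ofReal ((lam (n + (r : ℤ)) - lam n) * ‖ddiv lam f n r‖ ^ p)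

/-- `‖f‖_{eq,W}^p`, valued in `[0,∞]`. -/
noncomputable def eqWp (r : ℕ) (p : ℝ) (lam : ℤ → ℝ) (f : ℤ → ℂ) : ℝ≥0∞ :=
  eqLp r p lam f +
    ∑ j ∈ Finset.range r, ∑' n : ℤ,
      ENNReal.ofReal ((lam (n + (r : ℤ)) - lam n) ^ ((j : ℝ) * p + 1) *
        ‖ddiv lam f n j‖ ^ p)

/-- The cubic `q(x) = 4(x² - x³)`. -/
noncomputable def qcub : ℝ → ℝ := fun x => 4 * (x ^ 2 - x ^ 3)

/-- `α_n(f) = (h_n f[λ_{n-1},λ_n] + h_{n-1} f[λ_n,λ_{n+1}])/(h_{n-1}+h_n)`. -/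
noncomputable def alphaN (lam : ℤ → ℝ) (f : ℤ → ℂ) (n : ℤ) : ℂ :=
  (((lam (n + 1) - lam n : ℝ) : ℂ) * dd1 lam f (n - 1) +
      ((lam n - lam (n - 1) : ℝ) : ℂ) * dd1 lam f n) /
    ((lam (n + 1) - lam (n - 1) : ℝ) : ℂ)

/-- The formula for `Φ₁ f` on `[λ_n, λ_{n+1}]`. -/
noncomputable def phi1P (lam : ℤ → ℝ) (f : ℤ → ℂ) (n : ℤ) (x : ℝ) : ℂ :=
  f n * (((lam (n + 1) - x) / (lam (n + 1) - lam n) : ℝ) : ℂ) +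
    f (n + 1) * (((x - lam n) / (lam (n + 1) - lam n) : ℝ) : ℂ)

/-- The formula for `Φ₂ f` on `[μ_{n-1}, λ_n]`. -/
noncomputable def phi2L (lam : ℤ → ℝ) (f : ℤ → ℂ) (n : ℤ) (x : ℝ) : ℂ :=
  f n + alphaN lam f n * ((x - lam n : ℝ) : ℂ) +
    (((lam n - lam (n - 1)) ^ 2 : ℝ) : ℂ) * dd2 lam f (n - 1) *
      ((qcub ((lam n - x) / (lam n - lam (n - 1))) : ℝ) : ℂ)

/-- The formula for `Φ₂ f` on `[λ_n, μ_n]`. -/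
noncomputable def phi2R (lam : ℤ → ℝ) (f : ℤ → ℂ) (n : ℤ) (x : ℝ) : ℂ :=
  f n + alphaN lam f n * ((x - lam n : ℝ) : ℂ) +
    (((lam (n + 1) - lam n) ^ 2 : ℝ) : ℂ) * dd2 lam f (n - 1) *
      ((qcub ((x - lam n) / (lam (n + 1) - lam n)) : ℝ) : ℂ)

namespace Stmt19Aux

variable (lam : ℤ → ℝ) (f : ℤ → ℂ)

/-- derivative of `qcub`. -/
noncomputable def qd : ℝ → ℝ := fun x => 8 * x - 12 * x ^ 2

lemma hasDerivAt_qcub (x : ℝ) : HasDerivAt qcub (qd x) x := by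
  have h := (((hasDerivAt_pow 2 x).sub (hasDerivAt_pow 3 x)).const_mul (4 : ℝ))
  unfold qcub qd
  refine h.congr_deriv ?_
  ring

/-- derivative of `phi2R n`. -/
noncomputable def R' (n : ℤ) (x : ℝ) : ℂ :=
  alphaN lam f n + ((lam (n + 1) - lam n : ℝ) : ℂ) * dd2 lam f (n - 1) *
    ((qd ((x - lam n) / (lam (n + 1) - lam n)) : ℝ) : ℂ)

/-- derivative of `phi2L n`. -/
noncomputable def L' (n : ℤ) (x : ℝ) : ℂ :=
  alphaN lam f n - ((lam n - lam (n - 1) : ℝ) : ℂ) * dd2 lam f (n - 1) *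
    ((qd ((lam n - x) / (lam n - lam (n - 1))) : ℝ) : ℂ)

lemma continuous_R' (n : ℤ) : Continuous (R' lam f n) := by
  unfold R' qd
  fun_prop

lemma continuous_L' (n : ℤ) : Continuous (L' lam f n) := by
  unfold L' qd
  fun_prop

lemma hasDerivAt_phi2R (n : ℤ) (h : lam n < lam (n + 1)) (x : ℝ) :
    HasDerivAt (phi2R lam f n) (R' lam f n x) x := by
  have hne : lam (n + 1) - lam n ≠ 0 := sub_ne_zero.2 h.ne'
  have h1 : HasDerivAt (fun y : ℝ => (y - lam n) / (lam (n + 1) - lam n))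
      (1 / (lam (n + 1) - lam n)) x := by
    simpa using ((hasDerivAt_id x).sub_const (lam n)).div_const (lam (n + 1) - lam n)
  have h2 := (hasDerivAt_qcub ((x - lam n) / (lam (n + 1) - lam n))).comp x h1
  have h3 : HasDerivAt (fun y : ℝ => ((y - lam n : ℝ) : ℂ)) 1 x := by
    simpa using (((hasDerivAt_id x).sub_const (lam n)).ofReal_comp)
  have h4 := h2.ofReal_comp
  have h5 := ((HasDerivAt.const_mul (alphaN lam f n) h3).const_add (f n)).add
      (HasDerivAt.const_mul ((((lam (n + 1) - lam n) ^ 2 : ℝ) : ℂ) * dd2 lam f (n - 1)) h4)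
  have hC : ((lam (n + 1) : ℂ)) - ((lam n : ℂ)) ≠ 0 := by
    rw [← Complex.ofReal_sub]; exact_mod_cast hne
  refine h5.congr_deriv ?_
  simp only [R', mul_one]
  push_cast
  field_simp

lemma hasDerivAt_phi2L (n : ℤ) (h : lam (n - 1) < lam n) (x : ℝ) :
    HasDerivAt (phi2L lam f n) (L' lam f n x) x := by
  have hne : lam n - lam (n - 1) ≠ 0 := sub_ne_zero.2 h.ne'
  have h1 : HasDerivAt (fun y : ℝ => (lam n - y) / (lam n - lam (n - 1)))
      (-1 / (lam n - lam (n - 1))) x := by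
    simpa using ((hasDerivAt_id x).const_sub (lam n)).div_const (lam n - lam (n - 1))
  have h2 := (hasDerivAt_qcub ((lam n - x) / (lam n - lam (n - 1)))).comp x h1
  have h3 : HasDerivAt (fun y : ℝ => ((y - lam n : ℝ) : ℂ)) 1 x := by
    simpa using (((hasDerivAt_id x).sub_const (lam n)).ofReal_comp)
  have h4 := h2.ofReal_comp
  have h5 := ((HasDerivAt.const_mul (alphaN lam f n) h3).const_add (f n)).add
      (HasDerivAt.const_mul ((((lam n - lam (n - 1)) ^ 2 : ℝ) : ℂ) * dd2 lam f (n - 1)) h4)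
  have hC : ((lam n : ℂ)) - ((lam (n - 1) : ℂ)) ≠ 0 := by
    rw [← Complex.ofReal_sub]; exact_mod_cast hne
  refine h5.congr_deriv ?_
  simp only [L', mul_one]
  push_cast
  field_simp
  ring

lemma phi2R_lam (n : ℤ) : phi2R lam f n (lam n) = f n := by
  simp [phi2R, qcub]

lemma phi2L_lam (n : ℤ) : phi2L lam f n (lam n) = f n := by
  simp [phi2L, qcub]

lemma R'_lam (n : ℤ) : R' lam f n (lam n) = alphaN lam f n := by
  simp [R', qd]

lemma L'_lam (n : ℤ) : L' lam f n (lam n) = alphaN lam f n := by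
  simp [L', qd]

end Stmt19Aux

namespace Stmt19Aux

variable (lam : ℤ → ℝ) (f : ℤ → ℂ)

lemma key1 (n : ℤ) (hab : lam (n - 1) < lam n) (hbc : lam n < lam (n + 1)) :
    alphaN lam f n + ((lam (n + 1) - lam n : ℝ) : ℂ) * dd2 lam f (n - 1) = dd1 lam f n := by
  have e1 : n - 1 + 1 = n := by ring
  have e2 : n - 1 + 2 = n + 1 := by ring
  have h1 : ((lam n : ℂ)) - ((lam (n - 1) : ℂ)) ≠ 0 := by
    exact_mod_cast sub_ne_zero.2 hab.ne'
  have h2 : ((lam (n + 1) : ℂ)) - ((lam n : ℂ)) ≠ 0 := by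
    exact_mod_cast sub_ne_zero.2 hbc.ne'
  have h3 : ((lam (n + 1) : ℂ)) - ((lam (n - 1) : ℂ)) ≠ 0 := by
    exact_mod_cast sub_ne_zero.2 (hab.trans hbc).ne'
  simp only [alphaN, dd2, dd1, e1, e2]
  push_cast
  field_simp
  ring

lemma key2 (n : ℤ) (hbc : lam n < lam (n + 1)) (hcd : lam (n + 1) < lam (n + 2)) :
    alphaN lam f (n + 1) - ((lam (n + 1) - lam n : ℝ) : ℂ) * dd2 lam f n = dd1 lam f n := by
  have e3 : n + 1 + 1 = n + 2 := by ring
  have e4 : n + 1 - 1 = n := by ring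
  have h1 : ((lam (n + 1) : ℂ)) - ((lam n : ℂ)) ≠ 0 := by
    exact_mod_cast sub_ne_zero.2 hbc.ne'
  have h2 : ((lam (n + 2) : ℂ)) - ((lam (n + 1) : ℂ)) ≠ 0 := by
    exact_mod_cast sub_ne_zero.2 hcd.ne'
  have h3 : ((lam (n + 2) : ℂ)) - ((lam n : ℂ)) ≠ 0 := by
    exact_mod_cast sub_ne_zero.2 (hbc.trans hcd).ne'
  simp only [alphaN, dd2, dd1, e3, e4]
  push_cast
  field_simp
  ring

lemma R'_mu (n : ℤ) (hab : lam (n - 1) < lam n) (hbc : lam n < lam (n + 1)) :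
    R' lam f n ((lam n + lam (n + 1)) / 2) = dd1 lam f n := by
  have hne : lam (n + 1) - lam n ≠ 0 := sub_ne_zero.2 hbc.ne'
  have harg : ((lam n + lam (n + 1)) / 2 - lam n) / (lam (n + 1) - lam n) = 1 / 2 := by
    field_simp; ring
  rw [R', harg, show qd (1 / 2 : ℝ) = 1 by norm_num [qd]]
  rw [Complex.ofReal_one, mul_one]
  exact key1 lam f n hab hbc

lemma L'_mu (n : ℤ) (hbc : lam n < lam (n + 1)) (hcd : lam (n + 1) < lam (n + 2)) :
    L' lam f (n + 1) ((lam n + lam (n + 1)) / 2) = dd1 lam f n := by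
  have e4 : n + 1 - 1 = n := by ring
  have hne : lam (n + 1) - lam n ≠ 0 := sub_ne_zero.2 hbc.ne'
  have harg : (lam (n + 1) - (lam n + lam (n + 1)) / 2) / (lam (n + 1) - lam n) = 1 / 2 := by
    field_simp; ring
  rw [L', e4, harg, show qd (1 / 2 : ℝ) = 1 by norm_num [qd]]
  rw [Complex.ofReal_one, mul_one]
  exact key2 lam f n hbc hcd

lemma phi2R_mu (n : ℤ) (hab : lam (n - 1) < lam n) (hbc : lam n < lam (n + 1)) :
    phi2R lam f n ((lam n + lam (n + 1)) / 2) = (f n + f (n + 1)) / 2 := by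
  have hne : lam (n + 1) - lam n ≠ 0 := sub_ne_zero.2 hbc.ne'
  have hC : ((lam (n + 1) - lam n : ℝ) : ℂ) ≠ 0 := by exact_mod_cast hne
  have harg : ((lam n + lam (n + 1)) / 2 - lam n) / (lam (n + 1) - lam n) = 1 / 2 := by
    field_simp; ring
  have hK := key1 lam f n hab hbc
  have hK2 : (alphaN lam f n + ((lam (n + 1) - lam n : ℝ) : ℂ) * dd2 lam f (n - 1)) *
      ((lam (n + 1) - lam n : ℝ) : ℂ) = f (n + 1) - f n := by
    rw [hK, dd1]; exact div_mul_cancel₀ _ hC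
  rw [phi2R, harg, show qcub (1 / 2 : ℝ) = 1 / 2 by norm_num [qcub]]
  push_cast at hK2 ⊢
  linear_combination hK2 / 2

lemma phi2L_mu (n : ℤ) (hbc : lam n < lam (n + 1)) (hcd : lam (n + 1) < lam (n + 2)) :
    phi2L lam f (n + 1) ((lam n + lam (n + 1)) / 2) = (f n + f (n + 1)) / 2 := by
  have e4 : n + 1 - 1 = n := by ring
  have hne : lam (n + 1) - lam n ≠ 0 := sub_ne_zero.2 hbc.ne'
  have hC : ((lam (n + 1) - lam n : ℝ) : ℂ) ≠ 0 := by exact_mod_cast hne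
  have harg : (lam (n + 1) - (lam n + lam (n + 1)) / 2) / (lam (n + 1) - lam n) = 1 / 2 := by
    field_simp; ring
  have hK := key2 lam f n hbc hcd
  have hK2 : (alphaN lam f (n + 1) - ((lam (n + 1) - lam n : ℝ) : ℂ) * dd2 lam f n) *
      ((lam (n + 1) - lam n : ℝ) : ℂ) = f (n + 1) - f n := by
    rw [hK, dd1]; exact div_mul_cancel₀ _ hC
  rw [phi2L, e4, harg, show qcub (1 / 2 : ℝ) = 1 / 2 by norm_num [qcub]]
  push_cast at hK2 ⊢
  linear_combination (-1 / 2 : ℂ) * hK2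

end Stmt19Aux

open Stmt19Aux

/-- the two piecewise cubic formulas defining `Φ₂ f` agree at the common
endpoints `λ_n` and `μ_n` (so `Φ₂ f` is well defined), the resulting function is `C¹` on `ℝ`,
and for every `n`: `(Φ₂f)(λ_n) = f_n`, `(Φ₂f)'(λ_n) = α_n(f)`,
`(Φ₂f)(μ_n) = (f_n + f_{n+1})/2`, `(Φ₂f)'(μ_n) = f[λ_n,λ_{n+1}]`. -/
theorem stmt19 (lam : ℤ → ℝ) (hlam : GoodSeq lam) (f : ℤ → ℂ) :
    (∀ n : ℤ, phi2L lam f n (lam n) = phi2R lam f n (lam n)) ∧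
    (∀ n : ℤ, phi2R lam f n ((lam n + lam (n + 1)) / 2) =
      phi2L lam f (n + 1) ((lam n + lam (n + 1)) / 2)) ∧
    ∀ F : ℝ → ℂ,
      (∀ n : ℤ, ∀ x : ℝ, (lam (n - 1) + lam n) / 2 ≤ x → x ≤ lam n →
        F x = phi2L lam f n x) →
      (∀ n : ℤ, ∀ x : ℝ, lam n ≤ x → x ≤ (lam n + lam (n + 1)) / 2 →
        F x = phi2R lam f n x) →
      ContDiff ℝ 1 F ∧
      ∀ n : ℤ,
        F (lam n) = f n ∧
        deriv F (lam n) = alphaN lam f n ∧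
        F ((lam n + lam (n + 1)) / 2) = (f n + f (n + 1)) / 2 ∧
        deriv F ((lam n + lam (n + 1)) / 2) = dd1 lam f n := by
  obtain ⟨hmono, hbot, htop⟩ := hlam
  have hlt : ∀ n : ℤ, lam n < lam (n + 1) := fun n => hmono (lt_add_one n)
  have hlt' : ∀ n : ℤ, lam (n - 1) < lam n := fun n => hmono (by omega)
  have hcd : ∀ n : ℤ, lam (n + 1) < lam (n + 2) := fun n => hmono (by omega)
  have hmul : ∀ n : ℤ, lam n < (lam n + lam (n + 1)) / 2 := fun n => by linarith [hlt n]
  have hmur : ∀ n : ℤ, (lam n + lam (n + 1)) / 2 < lam (n + 1) := fun n => by linarith [hlt n]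
  refine ⟨fun n => by rw [phi2L_lam, phi2R_lam], fun n => ?_, ?_⟩
  · rw [phi2R_mu lam f n (hlt' n) (hlt n), phi2L_mu lam f n (hlt n) (hcd n)]
  intro F hL hR
  -- index function
  have hE : ∀ x : ℝ, ∃ n : ℤ, lam n ≤ x ∧ x < lam (n + 1) := by
    intro x
    obtain ⟨a, ha⟩ := (hbot.eventually (Filter.eventually_le_atBot x)).exists
    obtain ⟨b, hb⟩ := (htop.eventually (Filter.eventually_gt_atTop x)).exists
    obtain ⟨n, hn1, hn2⟩ := Int.exists_greatest_of_bdd (P := fun z => lam z ≤ x)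
      ⟨b, fun z hz => le_of_lt (hmono.lt_iff_lt.1 (lt_of_le_of_lt hz hb))⟩ ⟨a, ha⟩
    exact ⟨n, hn1, lt_of_not_ge fun h => by have := hn2 (n + 1) h; omega⟩
  choose N hN1 hN2 using hE
  have hNu : ∀ (n : ℤ) (x : ℝ), lam n ≤ x → x < lam (n + 1) → N x = n := by
    intro n x h1 h2
    rcases lt_trichotomy (N x) n with h | h | h
    · exact absurd ((hmono.monotone (by omega : N x + 1 ≤ n)).trans h1) (not_le.2 (hN2 x))
    · exact h
    · exact absurd ((hmono.monotone (by omega : n + 1 ≤ N x)).trans (hN1 x)) (not_le.2 h2)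
  set g : ℝ → ℂ := fun x =>
    if x ≤ (lam (N x) + lam (N x + 1)) / 2 then R' lam f (N x) x else L' lam f (N x + 1) x
    with hgdef
  have hgR : ∀ (n : ℤ) (x : ℝ), lam n ≤ x → x ≤ (lam n + lam (n + 1)) / 2 →
      g x = R' lam f n x := by
    intro n x h1 h2
    have hNx : N x = n := hNu n x h1 (h2.trans_lt (hmur n))
    rw [hgdef]
    simp only [hNx]
    rw [if_pos h2]
  have hgL : ∀ (n : ℤ) (x : ℝ), (lam n + lam (n + 1)) / 2 < x → x < lam (n + 1) →
      g x = L' lam f (n + 1) x := by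
    intro n x h1 h2
    have hNx : N x = n := hNu n x ((hmul n).le.trans h1.le) h2
    rw [hgdef]
    simp only [hNx]
    rw [if_neg (not_le.2 h1)]
  -- gluing helpers
  have hIic : ∀ (x : ℝ) (φ : ℝ → ℂ) (d : ℂ) (a : ℝ), a < x → HasDerivAt φ d x →
      (∀ y, a < y → y ≤ x → F y = φ y) → HasDerivWithinAt F d (Set.Iic x) x := by
    intro x φ d a ha hφ hFy
    refine (hφ.hasDerivWithinAt).congr_of_eventuallyEq ?_ (hFy x ha le_rfl)
    filter_upwards [nhdsWithin_le_nhds (Ioi_mem_nhds ha), self_mem_nhdsWithin] with y h1 h2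
    exact hFy y h1 h2
  have hIci : ∀ (x : ℝ) (φ : ℝ → ℂ) (d : ℂ) (b : ℝ), x < b → HasDerivAt φ d x →
      (∀ y, x ≤ y → y < b → F y = φ y) → HasDerivWithinAt F d (Set.Ici x) x := by
    intro x φ d b hb hφ hFy
    refine (hφ.hasDerivWithinAt).congr_of_eventuallyEq ?_ (hFy x le_rfl hb)
    filter_upwards [nhdsWithin_le_nhds (Iio_mem_nhds hb), self_mem_nhdsWithin] with y h1 h2
    exact hFy y h2 h1
  have hAt : ∀ (x : ℝ) (φ : ℝ → ℂ) (d : ℂ) (a b : ℝ), a < x → x < b → HasDerivAt φ d x →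
      (∀ y, a < y → y < b → F y = φ y) → HasDerivAt F d x := by
    intro x φ d a b ha hb hφ hFy
    refine hφ.congr_of_eventuallyEq ?_
    filter_upwards [Ioo_mem_nhds ha hb] with y hy
    exact hFy y hy.1 hy.2
  have cIic : ∀ (x : ℝ) (φ : ℝ → ℂ) (a : ℝ), a < x → Continuous φ →
      (∀ y, a < y → y ≤ x → g y = φ y) → ContinuousWithinAt g (Set.Iic x) x := by
    intro x φ a ha hφ hgy
    refine (hφ.continuousAt.continuousWithinAt).congr_of_eventuallyEq ?_ (hgy x ha le_rfl)
    filter_upwards [nhdsWithin_le_nhds (Ioi_mem_nhds ha), self_mem_nhdsWithin] with y h1 h2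
    exact hgy y h1 h2
  have cIci : ∀ (x : ℝ) (φ : ℝ → ℂ) (b : ℝ), x < b → Continuous φ →
      (∀ y, x ≤ y → y < b → g y = φ y) → ContinuousWithinAt g (Set.Ici x) x := by
    intro x φ b hb hφ hgy
    refine (hφ.continuousAt.continuousWithinAt).congr_of_eventuallyEq ?_ (hgy x le_rfl hb)
    filter_upwards [nhdsWithin_le_nhds (Iio_mem_nhds hb), self_mem_nhdsWithin] with y h1 h2
    exact hgy y h2 h1
  have cAt : ∀ (x : ℝ) (φ : ℝ → ℂ) (a b : ℝ), a < x → x < b → Continuous φ →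
      (∀ y, a < y → y < b → g y = φ y) → ContinuousAt g x := by
    intro x φ a b ha hb hφ hgy
    refine hφ.continuousAt.congr ?_
    filter_upwards [Ioo_mem_nhds ha hb] with y hy
    exact (hgy y hy.1 hy.2).symm
  have en : ∀ n : ℤ, n - 1 + 1 = n := fun n => by ring
  have en' : ∀ n : ℤ, n + 1 - 1 = n := fun n => by ring
  have hba : ∀ n : ℤ, lam (n + 1 - 1) < lam (n + 1) := fun n => by
    rw [en']; exact hlt n
  have key : ∀ x : ℝ, HasDerivAt F (g x) x ∧ ContinuousAt g x := by
    intro x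
    rcases eq_or_lt_of_le (hN1 x) with heq | hx1
    · -- x = lam (N x)
      set n := N x with hn
      have hvalL : L' lam f n x = alphaN lam f n := by
        rw [← heq]; exact L'_lam lam f n
      have hvalR : R' lam f n x = alphaN lam f n := by
        rw [← heq]; exact R'_lam lam f n
      have hgx : g x = alphaN lam f n := by
        rw [hgR n x (hN1 x) (heq ▸ (hmul n).le)]; exact hvalR
      have hmx : (lam (n - 1) + lam n) / 2 < x := by
        have := hlt' n; rw [← heq]; linarith
      have hdL : HasDerivWithinAt F (alphaN lam f n) (Set.Iic x) x :=
        hvalL ▸ hIic x (phi2L lam f n) (L' lam f n x) ((lam (n - 1) + lam n) / 2) hmx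
          (hasDerivAt_phi2L lam f n (hlt' n) x)
          (fun y h1 h2 => hL n y h1.le (h2.trans heq.symm.le))
      have hdR : HasDerivWithinAt F (alphaN lam f n) (Set.Ici x) x :=
        hvalR ▸ hIci x (phi2R lam f n) (R' lam f n x) ((lam n + lam (n + 1)) / 2)
          (heq ▸ hmul n)
          (hasDerivAt_phi2R lam f n (hlt n) x)
          (fun y h1 h2 => hR n y (heq.le.trans h1) h2.le)
      constructor
      · rw [hgx]
        have := hdL.union hdR
        rwa [Set.Iic_union_Ici, hasDerivWithinAt_univ] at this
      · refine continuousAt_iff_continuous_left_right.2 ⟨?_, ?_⟩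
        · refine cIic x (L' lam f n) ((lam (n - 1) + lam n) / 2) hmx
            (continuous_L' lam f n) ?_
          intro y h1 h2
          rcases h2.lt_or_eq with h2' | h2'
          · have hy2 : y < lam (n - 1 + 1) := by rw [en]; exact h2'.trans_le heq.symm.le
            have := hgL (n - 1) y (by rw [en]; exact h1) hy2
            rwa [en] at this
          · rw [h2', hgx]; exact hvalL.symm
        · refine cIci x (R' lam f n) ((lam n + lam (n + 1)) / 2)
            (heq ▸ hmul n) (continuous_R' lam f n) ?_
          intro y h1 h2
          exact hgR n y (heq.le.trans h1) h2.le
    · set n := N x with hn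
      rcases lt_trichotomy x ((lam n + lam (n + 1)) / 2) with h2 | h2 | h2
      · -- interior of [lam n, mu n]
        have hgx : g x = R' lam f n x := hgR n x (hN1 x) h2.le
        constructor
        · rw [hgx]
          exact hAt x (phi2R lam f n) (R' lam f n x) (lam n) ((lam n + lam (n + 1)) / 2)
            hx1 h2 (hasDerivAt_phi2R lam f n (hlt n) x)
            (fun y hy1 hy2 => hR n y hy1.le hy2.le)
        · exact cAt x (R' lam f n) (lam n) ((lam n + lam (n + 1)) / 2) hx1 h2
            (continuous_R' lam f n) (fun y hy1 hy2 => hgR n y hy1.le hy2.le)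
      · -- x = mu n
        have hvalR2 : R' lam f n x = dd1 lam f n := by
          rw [h2]; exact R'_mu lam f n (hlt' n) (hlt n)
        have hvalL2 : L' lam f (n + 1) x = dd1 lam f n := by
          rw [h2]; exact L'_mu lam f n (hlt n) (hcd n)
        have hgx : g x = dd1 lam f n := by
          rw [hgR n x (hN1 x) h2.le]; exact hvalR2
        have hxb : x < lam (n + 1) := h2 ▸ hmur n
        have hdL : HasDerivWithinAt F (dd1 lam f n) (Set.Iic x) x :=
          hvalR2 ▸ hIic x (phi2R lam f n) (R' lam f n x) (lam n) hx1
            (hasDerivAt_phi2R lam f n (hlt n) x)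
            (fun y h1 h2' => hR n y h1.le (h2'.trans h2.le))
        have hdR : HasDerivWithinAt F (dd1 lam f n) (Set.Ici x) x :=
          hvalL2 ▸ hIci x (phi2L lam f (n + 1)) (L' lam f (n + 1) x) (lam (n + 1)) hxb
            (hasDerivAt_phi2L lam f (n + 1) (hba n) x)
            (fun y h1 h2' => hL (n + 1) y (by rw [en']; exact h2 ▸ h1) h2'.le)
        constructor
        · rw [hgx]
          have := hdL.union hdR
          rwa [Set.Iic_union_Ici, hasDerivWithinAt_univ] at this
        · refine continuousAt_iff_continuous_left_right.2 ⟨?_, ?_⟩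
          · exact cIic x (R' lam f n) (lam n) hx1 (continuous_R' lam f n)
              (fun y h1 h2' => hgR n y h1.le (h2'.trans h2.le))
          · refine cIci x (L' lam f (n + 1)) (lam (n + 1)) hxb
              (continuous_L' lam f (n + 1)) ?_
            intro y h1 h2'
            rcases h1.lt_or_eq with h1' | h1'
            · exact hgL n y (h2 ▸ h1') h2'
            · rw [← h1', hgx]; exact hvalL2.symm
      · -- interior of [mu n, lam (n+1)]
        have hgx : g x = L' lam f (n + 1) x := hgL n x h2 (hN2 x)
        constructor
        · rw [hgx]
          exact hAt x (phi2L lam f (n + 1)) (L' lam f (n + 1) x)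
            ((lam n + lam (n + 1)) / 2) (lam (n + 1)) h2 (hN2 x)
            (hasDerivAt_phi2L lam f (n + 1) (hba n) x)
            (fun y hy1 hy2 => hL (n + 1) y (by rw [en']; exact hy1.le) hy2.le)
        · exact cAt x (L' lam f (n + 1)) ((lam n + lam (n + 1)) / 2) (lam (n + 1)) h2
            (hN2 x) (continuous_L' lam f (n + 1)) (fun y hy1 hy2 => hgL n y hy1 hy2)
  have hderiv : deriv F = g := funext fun x => ((key x).1).deriv
  refine ⟨?_, ?_⟩
  · rw [contDiff_one_iff_deriv]
    exact ⟨fun x => ((key x).1).differentiableAt, hderiv ▸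
      continuous_iff_continuousAt.2 fun x => (key x).2⟩
  · intro n
    refine ⟨?_, ?_, ?_, ?_⟩
    · rw [hR n (lam n) le_rfl (hmul n).le, phi2R_lam]
    · rw [hderiv, hgR n (lam n) le_rfl (hmul n).le, R'_lam]
    · rw [hR n ((lam n + lam (n + 1)) / 2) (hmul n).le le_rfl,
        phi2R_mu lam f n (hlt' n) (hlt n)]
    · rw [hderiv, hgR n ((lam n + lam (n + 1)) / 2) (hmul n).le le_rfl,
        R'_mu lam f n (hlt' n) (hlt n)]
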